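/- arXiv:2305.01317 — 3 statements merged into one kernel-verified Lean document; each statement's English description precedes it below -/
import Mathlib

section
/- Let γ ∈ ℝ, δ > 0, c' > 0. The equation 1 + (C - c')δ + e^{γ + δC} = 0 in the unknown C has the unique real solution C* = -(W(e^{γ + δc' - 1}) - δc' + 1)/δ, where W is the principal branch of the Lambert W function (i.e., W(z)e^{W(z)} = z for z ≥ 0). -/
lemma xexp_inj {a b : ℝ} (ha : 0 < a) (hb : 0 < b)
    (h : a * Real.exp a = b * Real.exp b) : a = b := by
  rcases lt_trichotomy a b with h1 | h1 | h1
  · have h2 := Real.exp_lt_exp.2 h1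
    have h3 := Real.exp_pos a
    nlinarith
  · exact h1
  · have h2 := Real.exp_lt_exp.2 h1
    have h3 := Real.exp_pos b
    nlinarith

/-- The equation `1 + (C - c')δ + e^{γ + δC} = 0` has the unique real solution
`C* = -(W(e^{γ + δc' - 1}) - δc' + 1)/δ` where `W` is the principal Lambert W
function (the inverse of `y ↦ y e^y` on `[0, ∞)`). -/
theorem stmt_3 (γ δ c' : ℝ) (hδ : 0 < δ) (hc' : 0 < c')
    (W : ℝ → ℝ) (hW : ∀ x : ℝ, 0 ≤ x → 0 ≤ W x ∧ W x * Real.exp (W x) = x) :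
    ∀ C : ℝ,
      1 + (C - c') * δ + Real.exp (γ + δ * C) = 0 ↔
        C = -(W (Real.exp (γ + δ * c' - 1)) - δ * c' + 1) / δ := by
  intro C
  obtain ⟨hw0, hwe⟩ := hW (Real.exp (γ + δ * c' - 1)) (Real.exp_pos _).le
  set w := W (Real.exp (γ + δ * c' - 1)) with hwdef
  have hwpos : 0 < w := by
    have h1 : 0 < w * Real.exp w := hwe ▸ Real.exp_pos _
    nlinarith [Real.exp_pos w]
  constructor
  · intro hC
    set s : ℝ := -(1 + (C - c') * δ) with hs
    have ht : Real.exp (γ + δ * C) = s := by rw [hs]; linarith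
    have hspos : 0 < s := ht ▸ Real.exp_pos _
    have key : s * Real.exp s = w * Real.exp w := by
      rw [hwe]
      conv_lhs => rw [ht.symm]
      rw [← Real.exp_add]
      congr 1
      rw [ht, hs]; ring
    have hsw : s = w := xexp_inj hspos hwpos key
    rw [eq_div_iff hδ.ne']
    rw [hs] at hsw
    linarith
  · intro hC
    have hCδ : C * δ = -(w - δ * c' + 1) := by
      rw [hC]; field_simp
    have harg : γ + δ * C = γ + δ * c' - 1 - w := by
      nlinarith
    have hexp : Real.exp (γ + δ * C) = w := by
      rw [harg, Real.exp_sub, ← hwe]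
      field_simp
    rw [hexp]
    linarith [hCδ]
end

section
/- Let α ∈ [0,1], β > 0, c' > 0 with βc' ≥ α and α + β·(c'/2 - α/(2β)) ≤ 1. Then the minimum expected-cost contribution of an offer under the linear acceptance model, min_{C ≥ 0} [P(C)·C + (1-P(C))·c'] with P(C) = min(α + βC,1) for C > 0 and P(0) = 0, equals c' - (βc' + α)²/(4β). -/
/-- The minimum (infimum) expected-cost contribution of an offer under the linear
acceptance model equals `c' - (βc' + α)²/(4β)`. -/
theorem stmt_11 (α β c' : ℝ) (hα0 : 0 ≤ α) (hα1 : α ≤ 1) (hβ : 0 < β) (hc' : 0 < c')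
    (hαβ : α ≤ β * c') (hsat : α + β * (c' / 2 - α / (2 * β)) ≤ 1)
    (P : ℝ → ℝ) (hP : ∀ C : ℝ, P C = if C = 0 then 0 else min (α + β * C) 1) :
    IsGLB ((fun C : ℝ => P C * C + (1 - P C) * c') '' {C : ℝ | 0 ≤ C})
      (c' - (β * c' + α) ^ 2 / (4 * β)) := by
  have ht : c' - (β * c' + α) ^ 2 / (4 * β) ≤ c' := by
    have h1 : 0 ≤ (β * c' + α) ^ 2 / (4 * β) := by positivity
    linarith
  constructor
  · rintro x ⟨C, hC, rfl⟩
    simp only [Set.mem_setOf_eq] at hC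
    show c' - (β * c' + α) ^ 2 / (4 * β) ≤ P C * C + (1 - P C) * c'
    rw [hP]
    by_cases h0 : C = 0
    · simp [h0]
      linarith
    · have hCpos : 0 < C := lt_of_le_of_ne hC (Ne.symm h0)
      rw [if_neg h0]
      have key : (α + β * C) * C + (1 - (α + β * C)) * c'
          - (c' - (β * c' + α) ^ 2 / (4 * β))
          = (2 * β * C - β * c' + α) ^ 2 / (4 * β) := by
        field_simp
        ring
      have hpos : 0 ≤ (2 * β * C - β * c' + α) ^ 2 / (4 * β) := by positivity
      rcases le_or_gt (α + β * C) 1 with h1 | h1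
      · rw [min_eq_left h1]
        linarith
      · rw [min_eq_right h1.le]
        rcases le_or_gt C c' with h2 | h2
        · have hm : 0 ≤ (α + β * C - 1) * (c' - C) :=
            mul_nonneg (by linarith) (by linarith)
          have h4 : (α + β * C) * C + (1 - (α + β * C)) * c' ≤ C := by nlinarith
          linarith
        · linarith
  · intro b hb
    rcases lt_or_eq_of_le hαβ with hlt | heq
    · -- interior optimum attained at Cs = c'/2 - α/(2β) > 0
      set Cs : ℝ := c' / 2 - α / (2 * β) with hCs
      have hCspos : 0 < Cs := by
        rw [hCs, sub_pos, div_lt_div_iff₀ (by positivity) (by norm_num : (0:ℝ) < 2)]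
        linarith
      have hmem := hb ⟨Cs, le_of_lt hCspos, rfl⟩
      simp only at hmem
      rw [hP, if_neg (ne_of_gt hCspos), min_eq_left hsat] at hmem
      have key : (α + β * Cs) * Cs + (1 - (α + β * Cs)) * c'
          = c' - (β * c' + α) ^ 2 / (4 * β) := by
        rw [hCs]
        field_simp
        ring
      rw [← key]; exact hmem
    · -- boundary case α = β c' : infimum approached as C → 0+
      subst heq
      apply le_of_forall_pos_le_add
      intro ε hε
      rcases lt_or_eq_of_le hα1 with hαlt | hα1'
      · -- β c' < 1
        set C : ℝ := min ((1 - β * c') / β) (Real.sqrt (ε / β)) with hCdef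
        have hC0 : 0 < C := by
          apply lt_min
          · exact div_pos (by linarith) hβ
          · exact Real.sqrt_pos.mpr (by positivity)
        have hble : β * C ≤ 1 - β * c' := by
          have h := min_le_left ((1 - β * c') / β) (Real.sqrt (ε / β))
          calc β * C ≤ β * ((1 - β * c') / β) := by
                exact mul_le_mul_of_nonneg_left h hβ.le
            _ = 1 - β * c' := by field_simp
        have hsq : β * C ^ 2 ≤ ε := by
          have h := min_le_right ((1 - β * c') / β) (Real.sqrt (ε / β))
          have h2 : C ^ 2 ≤ ε / β := by
            calc C ^ 2 ≤ (Real.sqrt (ε / β)) ^ 2 := by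
                  exact pow_le_pow_left₀ hC0.le h 2
              _ = ε / β := Real.sq_sqrt (by positivity)
          calc β * C ^ 2 ≤ β * (ε / β) := mul_le_mul_of_nonneg_left h2 hβ.le
            _ = ε := by field_simp
        have hb' := hb ⟨C, hC0.le, rfl⟩
        simp only at hb'
        rw [hP, if_neg (ne_of_gt hC0), min_eq_left (by linarith)] at hb'
        have key : (β * c' + β * C) * C + (1 - (β * c' + β * C)) * c'
            = (c' - (β * c' + β * c') ^ 2 / (4 * β)) + β * C ^ 2 := by
          field_simp
          ring
        linarith
      · -- β c' = 1
        have hb' := hb ⟨ε / 2, (half_pos hε).le, rfl⟩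
        simp only at hb'
        have hmin : min (β * c' + β * (ε / 2)) 1 = 1 := by
          apply min_eq_right
          nlinarith
        rw [hP, if_neg (ne_of_gt (half_pos hε)), hmin] at hb'
        have ht0 : c' - (β * c' + β * c') ^ 2 / (4 * β) = 0 := by
          have h1 : β * c' = 1 := hα1'
          field_simp
          nlinarith [h1]
        rw [ht0]
        linarith
end

section
/- Let γ ∈ ℝ, δ > 0, c' > 0, and f(C) = (C - c')/(1 + e^{-(γ + δC)}). Let C* be the unique real zero of h(C) = 1 + (C - c')δ + e^{γ + δC}. Then f is strictly decreasing on (-∞, C*) and strictly increasing on (C*, ∞), so C* is the unique global minimizer of f on ℝ. -/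
private lemma stmt15_hasDerivAt (γ δ c' : ℝ) (C : ℝ) :
    HasDerivAt (fun C : ℝ => (C - c') / (1 + Real.exp (-(γ + δ * C))))
      (Real.exp (-(γ + δ * C)) * (1 + (C - c') * δ + Real.exp (γ + δ * C)) /
        (1 + Real.exp (-(γ + δ * C)))^2) C := by
  have hx : HasDerivAt (fun C : ℝ => -(γ + δ * C)) (-δ) C := by
    have : HasDerivAt (fun C : ℝ => γ + δ * C) δ C := by
      simpa using ((hasDerivAt_id C).const_mul δ).const_add γ
    exact this.neg
  have hv : HasDerivAt (fun C : ℝ => 1 + Real.exp (-(γ + δ * C)))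
      (Real.exp (-(γ + δ * C)) * (-δ)) C := ((hx.exp).const_add 1)
  have hu : HasDerivAt (fun C : ℝ => C - c') 1 C := by
    simpa using (hasDerivAt_id C).sub_const c'
  have hvne : (1 + Real.exp (-(γ + δ * C))) ≠ 0 := by positivity
  have := hu.fun_div hv hvne
  refine this.congr_deriv ?_
  have h1 : Real.exp (-(γ + δ * C)) * Real.exp (γ + δ * C) = 1 := by
    rw [← Real.exp_add, neg_add_cancel, Real.exp_zero]
  linear_combination (-1 : ℝ) * h1 / (1 + Real.exp (-(γ + δ * C)))^2

private lemma stmt15_h_lt (γ δ c' : ℝ) (hδ : 0 < δ) (Cstar : ℝ)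
    (hCstar : 1 + (Cstar - c') * δ + Real.exp (γ + δ * Cstar) = 0)
    {C : ℝ} (h : C < Cstar) : 1 + (C - c') * δ + Real.exp (γ + δ * C) < 0 := by
  have he : Real.exp (γ + δ * C) < Real.exp (γ + δ * Cstar) := by
    apply Real.exp_lt_exp.2; nlinarith
  nlinarith

private lemma stmt15_h_gt (γ δ c' : ℝ) (hδ : 0 < δ) (Cstar : ℝ)
    (hCstar : 1 + (Cstar - c') * δ + Real.exp (γ + δ * Cstar) = 0)
    {C : ℝ} (h : Cstar < C) : 0 < 1 + (C - c') * δ + Real.exp (γ + δ * C) := by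
  have he : Real.exp (γ + δ * Cstar) < Real.exp (γ + δ * C) := by
    apply Real.exp_lt_exp.2; nlinarith
  nlinarith

/-- If `C*` is the (unique) real zero of `h(C) = 1 + (C - c')δ + e^{γ + δC}`, then
`f(C) = (C - c')/(1 + e^{-(γ + δC)})` is strictly decreasing on `(-∞, C*)`, strictly
increasing on `(C*, ∞)`, and `C*` is its unique global minimizer on `ℝ`. -/
theorem stmt_15 (γ δ c' : ℝ) (hδ : 0 < δ) (hc' : 0 < c')
    (Cstar : ℝ) (hCstar : 1 + (Cstar - c') * δ + Real.exp (γ + δ * Cstar) = 0) :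
    StrictAntiOn (fun C : ℝ => (C - c') / (1 + Real.exp (-(γ + δ * C)))) (Set.Iio Cstar) ∧
    StrictMonoOn (fun C : ℝ => (C - c') / (1 + Real.exp (-(γ + δ * C)))) (Set.Ioi Cstar) ∧
    ∀ C : ℝ, C ≠ Cstar →
      (Cstar - c') / (1 + Real.exp (-(γ + δ * Cstar))) <
        (C - c') / (1 + Real.exp (-(γ + δ * C))) := by
  set f : ℝ → ℝ := fun C : ℝ => (C - c') / (1 + Real.exp (-(γ + δ * C))) with hf
  have hdiff : ∀ x : ℝ, DifferentiableAt ℝ f x := fun x =>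
    (stmt15_hasDerivAt γ δ c' x).differentiableAt
  have hderiv : ∀ x : ℝ, deriv f x =
      Real.exp (-(γ + δ * x)) * (1 + (x - c') * δ + Real.exp (γ + δ * x)) /
        (1 + Real.exp (-(γ + δ * x)))^2 := fun x =>
    (stmt15_hasDerivAt γ δ c' x).deriv
  have hcont : Continuous f := by
    fun_prop (disch := intros; positivity)
  have hanti : StrictAntiOn f (Set.Iic Cstar) := by
    apply strictAntiOn_of_deriv_neg (convex_Iic Cstar) hcont.continuousOn
    intro x hx
    rw [interior_Iic] at hx
    rw [hderiv x]
    apply div_neg_of_neg_of_pos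
    · have := stmt15_h_lt γ δ c' hδ Cstar hCstar hx
      have he : 0 < Real.exp (-(γ + δ * x)) := Real.exp_pos _
      nlinarith
    · positivity
  have hmono : StrictMonoOn f (Set.Ici Cstar) := by
    apply strictMonoOn_of_deriv_pos (convex_Ici Cstar) hcont.continuousOn
    intro x hx
    rw [interior_Ici] at hx
    rw [hderiv x]
    apply div_pos
    · have := stmt15_h_gt γ δ c' hδ Cstar hCstar hx
      have he : 0 < Real.exp (-(γ + δ * x)) := Real.exp_pos _
      nlinarith
    · positivity
  refine ⟨hanti.mono Set.Iio_subset_Iic_self, hmono.mono Set.Ioi_subset_Ici_self, ?_⟩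
  intro C hC
  rcases lt_or_gt_of_ne hC with h | h
  · exact hanti (Set.mem_Iic.mpr h.le) (Set.mem_Iic.mpr le_rfl) h
  · exact hmono (Set.mem_Ici.mpr le_rfl) (Set.mem_Ici.mpr h.le) h
end
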